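/- For |q| > 1 and any n ∈ ℤ, the coefficient t_n^{(2)} := Σ_{l+m=n} q^{-(l(l+1)+m(m+1))/2} of z^n in θ_q(z)² is nonzero. -/

import Mathlib

open Complex



private lemma natAbs_le_quad (a m : ℤ) : (m.natAbs : ℤ) ≤ m * m + a * m + (a * a + 1) := by
  nlinarith [Int.natAbs_mul_self' m, sq_nonneg (2 * a + m), sq_nonneg (3 * (m.natAbs : ℤ) - 2),
    Int.natCast_nonneg m.natAbs]

private lemma hasSum_geo_int {r : ℝ} (h0 : 0 ≤ r) (h1 : r < 1) :
    HasSum (fun m : ℤ => r ^ m.natAbs) ((1 - r)⁻¹ + r * (1 - r)⁻¹) := by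
  have hpos : HasSum (fun n : ℕ => r ^ n) (1 - r)⁻¹ := hasSum_geometric_of_lt_one h0 h1
  have hneg : HasSum (fun n : ℕ => r ^ (n + 1)) (r * (1 - r)⁻¹) := by
    simpa [pow_succ, mul_comm] using hpos.mul_left r
  have := hpos.int_rec hneg
  convert this using 1
  funext m
  cases m with
  | ofNat n => simp
  | negSucc n => simp [Int.natAbs_negSucc]

private lemma hasSum_geo_int' {r : ℝ} (h0 : 0 ≤ r) (h1 : r < 1) :
    HasSum (fun m : ℤ => if m = 0 then (0 : ℝ) else r ^ m.natAbs)
      ((1 - r)⁻¹ + r * (1 - r)⁻¹ - 1) := by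
  have := (hasSum_geo_int h0 h1).sub (hasSum_ite_eq (0 : ℤ) (1 : ℝ))
  have e : (fun m : ℤ => if m = 0 then (0 : ℝ) else r ^ m.natAbs)
      = fun b => r ^ b.natAbs - if b = 0 then 1 else 0 := by
    funext m
    by_cases hm : m = 0 <;> simp [hm]
  rw [e]
  exact this

private lemma geo_val_le {r : ℝ} (h0 : 0 ≤ r) (h4 : r ≤ 1 / 4) :
    (1 - r)⁻¹ + r * (1 - r)⁻¹ - 1 ≤ 2 / 3 := by
  have hpos : (0 : ℝ) < 1 - r := by linarith
  have hmul : (1 - r) * (1 - r)⁻¹ = 1 := mul_inv_cancel₀ hpos.ne'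
  have hinv : (0 : ℝ) ≤ (1 - r)⁻¹ := inv_nonneg.2 hpos.le
  nlinarith


/-- bound on a single zpow term -/
private lemma norm_zpow_le {x : ℂ} (h1 : ‖x‖ < 1) {m e : ℤ} (he : (m.natAbs : ℤ) ≤ e) :
    ‖x ^ e‖ ≤ ‖x‖ ^ m.natAbs := by
  have he0 : 0 ≤ e := le_trans (Int.natCast_nonneg _) he
  rw [show e = ((e.toNat : ℕ) : ℤ) from (Int.toNat_of_nonneg he0).symm, zpow_natCast, norm_pow]
  exact pow_le_pow_of_le_one (norm_nonneg x) h1.le (by omega)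

private lemma summable_norm_quad {x : ℂ} (h1 : ‖x‖ < 1) (hx0 : x ≠ 0) (a b : ℤ) :
    Summable fun m : ℤ => ‖x ^ (m * m + a * m + b)‖ := by
  have base : Summable fun m : ℤ => ‖x ^ (m * m + a * m + (a * a + 1))‖ := by
    refine Summable.of_nonneg_of_le (fun m => norm_nonneg _)
      (fun m => norm_zpow_le h1 (natAbs_le_quad a m)) (hasSum_geo_int (norm_nonneg x) h1).summable
  have key : ∀ m : ℤ, ‖x ^ (m * m + a * m + b)‖
      = ‖x ^ (b - (a * a + 1))‖ * ‖x ^ (m * m + a * m + (a * a + 1))‖ := by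
    intro m
    rw [← norm_mul, ← zpow_add₀ hx0]
    congr 2
    ring
  exact (base.mul_left _).congr fun m => (key m).symm

private lemma summable_norm_G {x : ℂ} (h1 : ‖x‖ < 1) (hx0 : x ≠ 0) :
    Summable fun m : ℤ => ‖x ^ (m * m)‖ := by
  have := summable_norm_quad h1 hx0 0 0
  simpa using this

private lemma summable_norm_F {x : ℂ} (h1 : ‖x‖ < 1) (hx0 : x ≠ 0) :
    Summable fun m : ℤ => ‖(-1 : ℂ) ^ m * x ^ (m * m)‖ := by
  refine (summable_norm_G h1 hx0).congr fun m => ?_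
  rw [norm_mul, norm_zpow]
  norm_num

private lemma summable_norm_H {x : ℂ} (h1 : ‖x‖ < 1) (hx0 : x ≠ 0) :
    Summable fun m : ℤ => ‖x ^ (m * m + m)‖ := by
  have := summable_norm_quad h1 hx0 1 0
  refine this.congr fun m => ?_
  congr 2
  ring


noncomputable def thG (x : ℂ) : ℂ := ∑' m : ℤ, x ^ (m * m)
noncomputable def thF (x : ℂ) : ℂ := ∑' m : ℤ, (-1 : ℂ) ^ m * x ^ (m * m)
noncomputable def thH (x : ℂ) : ℂ := ∑' m : ℤ, x ^ (m * m + m)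


private lemma hx2_norm {x : ℂ} (h1 : ‖x‖ < 1) : ‖x ^ 2‖ < 1 := by
  rw [norm_pow]
  exact pow_lt_one₀ (norm_nonneg x) h1 two_ne_zero

private lemma sq_zpow (x : ℂ) (k : ℤ) : (x ^ 2) ^ k = x ^ (2 * k) := by
  rw [← zpow_natCast x 2, ← zpow_mul]
  norm_num

private lemma GG_eq {x : ℂ} (h1 : ‖x‖ < 1) (hx0 : x ≠ 0) :
    thG x * thG x = ∑' p : ℤ × ℤ, x ^ (p.1 * p.1 + p.2 * p.2) := by
  rw [thG, tsum_mul_tsum_of_summable_norm (summable_norm_G h1 hx0) (summable_norm_G h1 hx0)]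
  exact tsum_congr fun p => (zpow_add₀ hx0 _ _).symm

private lemma FF_eq {x : ℂ} (h1 : ‖x‖ < 1) (hx0 : x ≠ 0) : thF x * thF x
    = ∑' p : ℤ × ℤ, (-1 : ℂ) ^ (p.1 + p.2) * x ^ (p.1 * p.1 + p.2 * p.2) := by
  rw [thF, tsum_mul_tsum_of_summable_norm (summable_norm_F h1 hx0) (summable_norm_F h1 hx0)]
  refine tsum_congr fun p => ?_
  rw [zpow_add₀ (by norm_num : (-1 : ℂ) ≠ 0), zpow_add₀ hx0]
  ring

private lemma GF_eq {x : ℂ} (h1 : ‖x‖ < 1) (hx0 : x ≠ 0) : thG x * thF x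
    = ∑' p : ℤ × ℤ, (-1 : ℂ) ^ p.2 * x ^ (p.1 * p.1 + p.2 * p.2) := by
  rw [thG, thF, tsum_mul_tsum_of_summable_norm (summable_norm_G h1 hx0) (summable_norm_F h1 hx0)]
  refine tsum_congr fun p => ?_
  rw [zpow_add₀ hx0]
  ring

private lemma sumP_GG {x : ℂ} (h1 : ‖x‖ < 1) (hx0 : x ≠ 0) :
    Summable fun p : ℤ × ℤ => x ^ (p.1 * p.1 + p.2 * p.2) :=
  (summable_mul_of_summable_norm (summable_norm_G h1 hx0) (summable_norm_G h1 hx0)).congr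
    fun p => (zpow_add₀ hx0 _ _).symm

private lemma sumP_FF {x : ℂ} (h1 : ‖x‖ < 1) (hx0 : x ≠ 0) : Summable fun p : ℤ × ℤ =>
    (-1 : ℂ) ^ (p.1 + p.2) * x ^ (p.1 * p.1 + p.2 * p.2) :=
  (summable_mul_of_summable_norm (summable_norm_F h1 hx0) (summable_norm_F h1 hx0)).congr
    fun p => by rw [zpow_add₀ (by norm_num : (-1 : ℂ) ≠ 0), zpow_add₀ hx0]; ring

private lemma sumP_GF {x : ℂ} (h1 : ‖x‖ < 1) (hx0 : x ≠ 0) : Summable fun p : ℤ × ℤ =>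
    (-1 : ℂ) ^ p.2 * x ^ (p.1 * p.1 + p.2 * p.2) :=
  (summable_mul_of_summable_norm (summable_norm_G h1 hx0) (summable_norm_F h1 hx0)).congr
    fun p => by rw [zpow_add₀ hx0]; ring

private lemma sumP_FG {x : ℂ} (h1 : ‖x‖ < 1) (hx0 : x ≠ 0) : Summable fun p : ℤ × ℤ =>
    (-1 : ℂ) ^ p.1 * x ^ (p.1 * p.1 + p.2 * p.2) :=
  (summable_mul_of_summable_norm (summable_norm_F h1 hx0) (summable_norm_G h1 hx0)).congr
    fun p => by rw [zpow_add₀ hx0]; ring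

private lemma e_inj : Function.Injective (fun st : ℤ × ℤ => ((st.1 + st.2, st.1 - st.2) : ℤ × ℤ)) := by
  intro a b h
  simp only [Prod.mk.injEq, Prod.ext_iff] at h ⊢
  omega

private lemma e'_inj :
    Function.Injective (fun st : ℤ × ℤ => ((st.1 + st.2 + 1, st.1 - st.2) : ℤ × ℤ)) := by
  intro a b h
  simp only [Prod.mk.injEq, Prod.ext_iff] at h ⊢
  omega

/-- Identity (1): G(x)² + F(x)² = 2 G(x²)². -/
theorem identity1 {x : ℂ} (h1 : ‖x‖ < 1) (hx0 : x ≠ 0) :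
    thG x * thG x + thF x * thF x = 2 * (thG (x ^ 2) * thG (x ^ 2)) := by
  have hx20 : x ^ 2 ≠ 0 := pow_ne_zero _ hx0
  have h21 : ‖x ^ 2‖ < 1 := hx2_norm h1
  rw [GG_eq h1 hx0, FF_eq h1 hx0, ← Summable.tsum_add (sumP_GG h1 hx0) (sumP_FF h1 hx0),
    GG_eq h21 hx20, ← tsum_mul_left]
  calc (∑' p : ℤ × ℤ, (x ^ (p.1 * p.1 + p.2 * p.2)
        + (-1 : ℂ) ^ (p.1 + p.2) * x ^ (p.1 * p.1 + p.2 * p.2)))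
      = ∑' p : ℤ × ℤ, (1 + (-1 : ℂ) ^ (p.1 + p.2)) * x ^ (p.1 * p.1 + p.2 * p.2) :=
         tsum_congr fun p => by ring
    _ = ∑' st : ℤ × ℤ, (1 + (-1 : ℂ) ^ ((st.1 + st.2) + (st.1 - st.2)))
          * x ^ ((st.1 + st.2) * (st.1 + st.2) + (st.1 - st.2) * (st.1 - st.2)) := by
        refine (Function.Injective.tsum_eq e_inj ?_).symm
        intro p hp
        rcases Int.even_or_odd (p.1 + p.2) with he | ho
        · obtain ⟨r, hr⟩ := he
          exact ⟨(r, p.1 - r), by rw [Prod.ext_iff]; refine ⟨?_, ?_⟩ <;> simp <;> omega⟩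
        · exact absurd (by simp [Odd.neg_one_zpow ho]) hp
    _ = ∑' st : ℤ × ℤ, 2 * (x ^ 2) ^ (st.1 * st.1 + st.2 * st.2) := by
        refine tsum_congr fun st => ?_
        have he : (-1 : ℂ) ^ ((st.1 + st.2) + (st.1 - st.2)) = 1 :=
          Even.neg_one_zpow ⟨st.1, by ring⟩
        have e5 : x ^ ((st.1 + st.2) * (st.1 + st.2) + (st.1 - st.2) * (st.1 - st.2))
            = (x ^ 2) ^ (st.1 * st.1 + st.2 * st.2) := by
          rw [sq_zpow]
          congr 1
          ring
        rw [he, e5]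
        ring

/-- Identity (3): G(x)·F(x) = F(x²)². -/
theorem identity3 {x : ℂ} (h1 : ‖x‖ < 1) (hx0 : x ≠ 0) :
    thG x * thF x = thF (x ^ 2) * thF (x ^ 2) := by
  have hx20 : x ^ 2 ≠ 0 := pow_ne_zero _ hx0
  have h21 : ‖x ^ 2‖ < 1 := hx2_norm h1
  have hswap : (∑' p : ℤ × ℤ, (-1 : ℂ) ^ p.2 * x ^ (p.1 * p.1 + p.2 * p.2))
      = ∑' p : ℤ × ℤ, (-1 : ℂ) ^ p.1 * x ^ (p.1 * p.1 + p.2 * p.2) := by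
    rw [← (Equiv.prodComm ℤ ℤ).tsum_eq (fun p : ℤ × ℤ => (-1 : ℂ) ^ p.1
      * x ^ (p.1 * p.1 + p.2 * p.2))]
    refine tsum_congr fun p => ?_
    simp only [Equiv.prodComm_apply, Prod.fst_swap, Prod.snd_swap]
    congr 1
    ring
  refine mul_left_cancel₀ (two_ne_zero (α := ℂ)) ?_
  calc 2 * (thG x * thF x)
      = (∑' p : ℤ × ℤ, (-1 : ℂ) ^ p.1 * x ^ (p.1 * p.1 + p.2 * p.2))
        + ∑' p : ℤ × ℤ, (-1 : ℂ) ^ p.2 * x ^ (p.1 * p.1 + p.2 * p.2) := by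
        rw [GF_eq h1 hx0, two_mul, hswap]
    _ = ∑' p : ℤ × ℤ, ((-1 : ℂ) ^ p.1 + (-1 : ℂ) ^ p.2) * x ^ (p.1 * p.1 + p.2 * p.2) := by
        rw [← Summable.tsum_add (sumP_FG h1 hx0) (sumP_GF h1 hx0)]
        exact tsum_congr fun p => by ring
    _ = ∑' st : ℤ × ℤ, ((-1 : ℂ) ^ (st.1 + st.2) + (-1 : ℂ) ^ (st.1 - st.2))
          * x ^ ((st.1 + st.2) * (st.1 + st.2) + (st.1 - st.2) * (st.1 - st.2)) := by
        refine (Function.Injective.tsum_eq e_inj ?_).symm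
        intro p hp
        rcases Int.even_or_odd (p.1 + p.2) with he | ho
        · obtain ⟨r, hr⟩ := he
          exact ⟨(r, p.1 - r), by rw [Prod.ext_iff]; refine ⟨?_, ?_⟩ <;> simp <;> omega⟩
        · rcases Int.even_or_odd p.1 with h1e | h1o
          · have h2o : Odd p.2 := by
              obtain ⟨r, hr⟩ := h1e; obtain ⟨s, hs⟩ := ho
              exact ⟨s - r, by omega⟩
            exact absurd (by simp [Even.neg_one_zpow h1e, Odd.neg_one_zpow h2o]) hp
          · have h2e : Even p.2 := by
              obtain ⟨r, hr⟩ := h1o; obtain ⟨s, hs⟩ := ho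
              exact ⟨s - r, by omega⟩
            exact absurd (by simp [Odd.neg_one_zpow h1o, Even.neg_one_zpow h2e]) hp
    _ = ∑' st : ℤ × ℤ, 2 * ((-1 : ℂ) ^ (st.1 + st.2)
          * (x ^ 2) ^ (st.1 * st.1 + st.2 * st.2)) := by
        refine tsum_congr fun st => ?_
        have hsame : (-1 : ℂ) ^ (st.1 - st.2) = (-1 : ℂ) ^ (st.1 + st.2) := by
          rw [show st.1 + st.2 = (st.1 - st.2) + 2 * st.2 by ring,
            zpow_add₀ (by norm_num : (-1 : ℂ) ≠ 0), Even.neg_one_zpow ⟨st.2, two_mul st.2⟩,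
            mul_one]
        have e5 : x ^ ((st.1 + st.2) * (st.1 + st.2) + (st.1 - st.2) * (st.1 - st.2))
            = (x ^ 2) ^ (st.1 * st.1 + st.2 * st.2) := by
          rw [sq_zpow]
          congr 1
          ring
        rw [hsame, e5]
        ring
    _ = 2 * (thF (x ^ 2) * thF (x ^ 2)) := by
        rw [FF_eq h21 hx20, ← tsum_mul_left]

/-- Identity (2): G(x)² − F(x)² = 2 x H(x²)². -/
theorem identity2 {x : ℂ} (h1 : ‖x‖ < 1) (hx0 : x ≠ 0) :
    thG x * thG x - thF x * thF x = 2 * x * (thH (x ^ 2) * thH (x ^ 2)) := by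
  have hx20 : x ^ 2 ≠ 0 := pow_ne_zero _ hx0
  have h21 : ‖x ^ 2‖ < 1 := hx2_norm h1
  rw [GG_eq h1 hx0, FF_eq h1 hx0, ← Summable.tsum_sub (sumP_GG h1 hx0) (sumP_FF h1 hx0)]
  calc (∑' p : ℤ × ℤ, (x ^ (p.1 * p.1 + p.2 * p.2)
        - (-1 : ℂ) ^ (p.1 + p.2) * x ^ (p.1 * p.1 + p.2 * p.2)))
      = ∑' p : ℤ × ℤ, (1 - (-1 : ℂ) ^ (p.1 + p.2)) * x ^ (p.1 * p.1 + p.2 * p.2) :=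
        tsum_congr fun p => by ring
    _ = ∑' st : ℤ × ℤ, (1 - (-1 : ℂ) ^ ((st.1 + st.2 + 1) + (st.1 - st.2)))
          * x ^ ((st.1 + st.2 + 1) * (st.1 + st.2 + 1) + (st.1 - st.2) * (st.1 - st.2)) := by
        refine (Function.Injective.tsum_eq e'_inj ?_).symm
        intro p hp
        rcases Int.even_or_odd (p.1 + p.2) with he | ho
        · exact absurd (by simp [Even.neg_one_zpow he]) hp
        · obtain ⟨r, hr⟩ := ho
          exact ⟨(r, p.1 - 1 - r), by rw [Prod.ext_iff]; refine ⟨?_, ?_⟩ <;> simp <;> omega⟩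
    _ = ∑' st : ℤ × ℤ, 2 * x * ((x ^ 2) ^ (st.1 * st.1 + st.1)
          * (x ^ 2) ^ (st.2 * st.2 + st.2)) := by
        refine tsum_congr fun st => ?_
        have ho : (-1 : ℂ) ^ ((st.1 + st.2 + 1) + (st.1 - st.2)) = -1 :=
          Odd.neg_one_zpow ⟨st.1, by ring⟩
        have e5 : x ^ ((st.1 + st.2 + 1) * (st.1 + st.2 + 1) + (st.1 - st.2) * (st.1 - st.2))
            = x * ((x ^ 2) ^ (st.1 * st.1 + st.1) * (x ^ 2) ^ (st.2 * st.2 + st.2)) := by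
          rw [sq_zpow, sq_zpow, ← zpow_add₀ hx0,
            show (st.1 + st.2 + 1) * (st.1 + st.2 + 1) + (st.1 - st.2) * (st.1 - st.2)
              = 1 + (2 * (st.1 * st.1 + st.1) + 2 * (st.2 * st.2 + st.2)) by ring,
            zpow_add₀ hx0, zpow_one]
        rw [ho, e5]
        ring
    _ = 2 * x * (thH (x ^ 2) * thH (x ^ 2)) := by
        rw [thH, tsum_mul_tsum_of_summable_norm (summable_norm_H h21 hx20)
          (summable_norm_H h21 hx20), ← tsum_mul_left]



/-- the tail bound workhorse: if `c` is bounded termwise by the geometric tail,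
its sum has norm at most `2/3`. -/
private lemma tail_bound {y : ℂ} (h4 : ‖y‖ ≤ 1 / 4) (c : ℤ → ℂ)
    (hle : ∀ m : ℤ, ‖c m‖ ≤ (if m = 0 then (0 : ℝ) else ‖y‖ ^ m.natAbs)) :
    ‖∑' m : ℤ, c m‖ ≤ 2 / 3 := by
  have h1 : ‖y‖ < 1 := lt_of_le_of_lt h4 (by norm_num)
  have hgs := hasSum_geo_int' (norm_nonneg y) h1
  have hsn : Summable fun m : ℤ => ‖c m‖ :=
    Summable.of_nonneg_of_le (fun m => norm_nonneg _) hle hgs.summable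
  calc ‖∑' m : ℤ, c m‖ ≤ ∑' m : ℤ, ‖c m‖ := norm_tsum_le_tsum_norm hsn
    _ ≤ ∑' m : ℤ, (if m = 0 then (0 : ℝ) else ‖y‖ ^ m.natAbs) :=
        Summable.tsum_le_tsum hle hsn hgs.summable
    _ = (1 - ‖y‖)⁻¹ + ‖y‖ * (1 - ‖y‖)⁻¹ - 1 := hgs.tsum_eq
    _ ≤ 2 / 3 := geo_val_le (norm_nonneg y) h4

private lemma thF_small {y : ℂ} (h4 : ‖y‖ ≤ 1 / 4) (hy0 : y ≠ 0) : thF y ≠ 0 := by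
  have h1 : ‖y‖ < 1 := lt_of_le_of_lt h4 (by norm_num)
  have sF : Summable fun m : ℤ => (-1 : ℂ) ^ m * y ^ (m * m) :=
    (summable_norm_F h1 hy0).of_norm
  have e0 : thF y = 1 + ∑' m : ℤ, (if m = 0 then 0 else (-1 : ℂ) ^ m * y ^ (m * m)) := by
    rw [thF, Summable.tsum_eq_add_tsum_ite sF 0]
    norm_num
  have hb : ‖∑' m : ℤ, (if m = 0 then 0 else (-1 : ℂ) ^ m * y ^ (m * m))‖ ≤ 2 / 3 := by
    refine tail_bound h4 _ fun m => ?_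
    by_cases hm : m = 0
    · simp [hm]
    · simp only [if_neg hm]
      have : ‖(-1 : ℂ) ^ m * y ^ (m * m)‖ = ‖y ^ (m * m)‖ := by
        rw [norm_mul, norm_zpow]
        norm_num
      rw [this]
      refine norm_zpow_le h1 ?_
      nlinarith [Int.natAbs_mul_self' m, sq_nonneg ((m.natAbs : ℤ) - 1),
        Int.natCast_nonneg m.natAbs]
  intro h0
  rw [h0] at e0
  have hT : (∑' m : ℤ, (if m = 0 then 0 else (-1 : ℂ) ^ m * y ^ (m * m))) = -1 := by
    linear_combination -e0
  rw [hT, norm_neg, norm_one] at hb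
  norm_num at hb

private lemma thH_small {y : ℂ} (h4 : ‖y‖ ≤ 1 / 4) (hy0 : y ≠ 0) : thH y ≠ 0 := by
  have h1 : ‖y‖ < 1 := lt_of_le_of_lt h4 (by norm_num)
  have sH : Summable fun m : ℤ => y ^ (m * m + m) := (summable_norm_H h1 hy0).of_norm
  have sH1 : Summable fun m : ℤ => (if m = 0 then 0 else y ^ (m * m + m)) := by
    refine (sH.sub (hasSum_ite_eq (0 : ℤ) ((1 : ℂ))).summable).congr fun m => ?_
    by_cases hm : m = 0 <;> simp [hm]
  have e0 : thH y = 2 + ∑' m : ℤ,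
      (if m = -1 then 0 else if m = 0 then 0 else y ^ (m * m + m)) := by
    rw [thH, Summable.tsum_eq_add_tsum_ite sH 0, Summable.tsum_eq_add_tsum_ite sH1 (-1)]
    norm_num
    ring
  have hb : ‖∑' m : ℤ, (if m = -1 then 0 else if m = 0 then 0 else y ^ (m * m + m))‖ ≤ 2 / 3 := by
    refine tail_bound h4 _ fun m => ?_
    by_cases hm1 : m = -1
    · simp [hm1, norm_nonneg, pow_nonneg]
    · rw [if_neg hm1]
      by_cases hm : m = 0
      · simp [hm]
      · rw [if_neg hm, if_neg hm]
        refine norm_zpow_le h1 ?_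
        rcases le_or_gt 1 m with hge | hlt
        · have : (m.natAbs : ℤ) = m := Int.natAbs_of_nonneg (by omega)
          nlinarith
        · have hm2 : m ≤ -2 := by omega
          have : (m.natAbs : ℤ) = -m := by
            rw [Int.ofNat_natAbs_of_nonpos (by omega)]
          nlinarith [mul_nonneg (by linarith : (0:ℤ) ≤ -m) (by linarith : (0:ℤ) ≤ -(m + 2))]
  intro h0
  rw [h0] at e0
  have hT : (∑' m : ℤ, (if m = -1 then 0 else if m = 0 then 0 else y ^ (m * m + m))) = -2 := by
    linear_combination -e0
  rw [hT, norm_neg] at hb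
  simp at hb
  norm_num at hb

private lemma iterate_ne {P : ℂ → Prop}
    (step : ∀ y : ℂ, ‖y‖ < 1 → y ≠ 0 → P y → P (y ^ 2))
    (small : ∀ y : ℂ, ‖y‖ ≤ 1 / 4 → y ≠ 0 → ¬P y) :
    ∀ y : ℂ, ‖y‖ < 1 → y ≠ 0 → ¬P y := by
  intro y h1 h0 hP
  have key : ∀ n : ℕ, P (y ^ 2 ^ n) := by
    intro n
    induction n with
    | zero => simpa using hP
    | succ n ih =>
      have hn1 : ‖y ^ 2 ^ n‖ < 1 := by
        rw [norm_pow]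
        exact pow_lt_one₀ (norm_nonneg y) h1 (by positivity : (0:ℕ) < 2 ^ n).ne'
      have := step (y ^ 2 ^ n) hn1 (pow_ne_zero _ h0) ih
      rw [← pow_mul, ← pow_succ] at this
      exact this
  obtain ⟨n, hn⟩ : ∃ n : ℕ, ‖y‖ ^ n < 1 / 4 := exists_pow_lt_of_lt_one (by norm_num) h1
  refine small (y ^ 2 ^ n) ?_ (pow_ne_zero _ h0) (key n)
  rw [norm_pow]
  calc ‖y‖ ^ 2 ^ n ≤ ‖y‖ ^ n :=
        pow_le_pow_of_le_one (norm_nonneg y) h1.le (Nat.lt_two_pow_self (n := n)).le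
    _ ≤ 1 / 4 := hn.le

theorem thF_ne {x : ℂ} (h1 : ‖x‖ < 1) (hx0 : x ≠ 0) : thF x ≠ 0 := by
  refine iterate_ne (P := fun y => thF y = 0) (fun y hy1 hy0 hy => ?_) (fun y h4 hy0 => thF_small h4 hy0) x h1 hx0
  have h3 := identity3 hy1 hy0
  rw [hy, mul_zero] at h3
  exact mul_self_eq_zero.1 h3.symm

theorem thG_ne {x : ℂ} (h1 : ‖x‖ < 1) (hx0 : x ≠ 0) : thG x ≠ 0 := by
  intro h
  have h3 := identity3 h1 hx0
  rw [h, zero_mul] at h3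
  exact thF_ne (hx2_norm h1) (pow_ne_zero _ hx0) (mul_self_eq_zero.1 h3.symm)

theorem thH_ne {x : ℂ} (h1 : ‖x‖ < 1) (hx0 : x ≠ 0) : thH x ≠ 0 := by
  refine iterate_ne (P := fun y => thH y = 0) (fun y hy1 hy0 hy => ?_) (fun y h4 hy0 => thH_small h4 hy0) x h1 hx0
  -- choose a square root of y
  obtain ⟨w, hw⟩ : ∃ w : ℂ, w ^ 2 = y := IsAlgClosed.exists_pow_nat_eq y zero_lt_two
  have hw0 : w ≠ 0 := by
    intro h
    rw [h] at hw
    exact hy0 (by simpa using hw.symm)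
  have hw1 : ‖w‖ < 1 := by
    by_contra hge
    push_neg at hge
    have : (1 : ℝ) ≤ ‖w‖ ^ 2 := one_le_pow₀ hge
    rw [← norm_pow, hw] at this
    linarith
  -- identities at w
  have i2w := identity2 hw1 hw0
  have i1w := identity1 hw1 hw0
  have i3w := identity3 hw1 hw0
  rw [hw] at i2w i1w i3w
  rw [hy] at i2w
  -- G w ² = F w ²
  have hGF : thG w * thG w = thF w * thF w := by linear_combination i2w
  have hA : thG w * thG w = thG y * thG y := by linear_combination i1w / 2 + hGF / 2
  have h5 : (thG y * thG y) * (thG y * thG y) = (thF y * thF y) * (thF y * thF y) := by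
    calc (thG y * thG y) * (thG y * thG y) = (thG w * thG w) * (thG w * thG w) := by rw [hA]
      _ = (thG w * thG w) * (thF w * thF w) := by rw [← hGF]
      _ = (thG w * thF w) * (thG w * thF w) := by ring
      _ = (thF y * thF y) * (thF y * thF y) := by rw [i3w]
  have hy21 : ‖y ^ 2‖ < 1 := hx2_norm hy1
  have hy20 : y ^ 2 ≠ 0 := pow_ne_zero _ hy0
  have hplus : thG y * thG y + thF y * thF y ≠ 0 := by
    rw [identity1 hy1 hy0]
    exact mul_ne_zero two_ne_zero (mul_ne_zero (thG_ne hy21 hy20) (thG_ne hy21 hy20))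
  have hminus : thG y * thG y - thF y * thF y = 0 := by
    have hfac : (thG y * thG y - thF y * thF y) * (thG y * thG y + thF y * thF y) = 0 := by
      linear_combination h5
    rcases mul_eq_zero.1 hfac with h | h
    · exact h
    · exact absurd h hplus
  have i2y := identity2 hy1 hy0
  rw [hminus] at i2y
  have : thH (y ^ 2) * thH (y ^ 2) = 0 := by
    have h2y : (2 : ℂ) * y ≠ 0 := mul_ne_zero two_ne_zero hy0
    field_simp at i2y
    rcases mul_eq_zero.1 i2y.symm with h | h
    · exact absurd h h2y
    · rw [← pow_two]
      exact h
  exact mul_self_eq_zero.1 this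


/-- For `|q| > 1` and any `n ∈ ℤ`, the coefficient
`t_n^{(2)} = ∑_{l+m=n} q^{-(l(l+1)+m(m+1))/2}` of `z^n` in `θ_q(z)²` is nonzero. -/
theorem theta_square_coeff_ne_zero (q : ℂ) (hq : 1 < ‖q‖) (n : ℤ) :
    (∑' l : ℤ, q ^ (-((l * (l + 1) + (n - l) * (n - l + 1)) / 2))) ≠ 0 := by
  have hq0 : q ≠ 0 := by
    intro h
    rw [h] at hq
    simp at hq
    linarith
  set x : ℂ := q⁻¹ with hxdef
  have hx0 : x ≠ 0 := inv_ne_zero hq0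
  have hx1 : ‖x‖ < 1 := by
    rw [hxdef, norm_inv]
    rw [inv_lt_one_iff₀]
    right
    exact hq
  obtain ⟨k, hk⟩ : Even (n * (n + 1)) := Int.even_mul_succ_self n
  -- rewrite each term
  have hterm : ∀ l : ℤ, q ^ (-((l * (l + 1) + (n - l) * (n - l + 1)) / 2))
      = x ^ k * x ^ (l * l - n * l) := by
    intro l
    have hdiv : (l * (l + 1) + (n - l) * (n - l + 1)) / 2 = k + (l * l - n * l) := by
      have h2 : l * (l + 1) + (n - l) * (n - l + 1) = 2 * (k + (l * l - n * l)) := by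
        linear_combination hk
      rw [h2, Int.mul_ediv_cancel_left _ two_ne_zero]
    rw [hdiv, ← zpow_add₀ hx0, hxdef, inv_zpow, ← zpow_neg]
  rw [tsum_congr hterm, tsum_mul_left]
  refine mul_ne_zero (zpow_ne_zero _ hx0) ?_
  rcases Int.even_or_odd n with ⟨t, ht⟩ | ⟨t, ht⟩
  · -- even case: sum = x^(-t*t) * thG x
    have h2 : ∀ l : ℤ, x ^ (l * l - n * l) = x ^ (-(t * t)) * x ^ ((l - t) * (l - t)) := by
      intro l
      rw [← zpow_add₀ hx0]
      congr 1
      rw [ht]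
      ring
    rw [tsum_congr h2, tsum_mul_left]
    refine mul_ne_zero (zpow_ne_zero _ hx0) ?_
    have := (Equiv.subRight t).tsum_eq (fun l : ℤ => x ^ (l * l))
    simp only [Equiv.subRight_apply] at this
    rw [this]
    exact thG_ne hx1 hx0
  · -- odd case: sum = x^(-(t*t+t)) * thH x
    have h2 : ∀ l : ℤ, x ^ (l * l - n * l)
        = x ^ (-(t * t + t)) * x ^ ((t - l) * (t - l) + (t - l)) := by
      intro l
      rw [← zpow_add₀ hx0]
      congr 1
      rw [ht]
      ring
    rw [tsum_congr h2, tsum_mul_left]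
    refine mul_ne_zero (zpow_ne_zero _ hx0) ?_
    have := (Equiv.subLeft t).tsum_eq (fun l : ℤ => x ^ (l * l + l))
    simp only [Equiv.subLeft_apply] at this
    rw [this]
    exact thH_ne hx1 hx0
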